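/- Let (A; A⁺) be an F₁-domain: A⁺∖{0} cancellative, A a localisation of A⁺, A⁺ sharp and integrally closed in A. Let (M,≤) be a lower saturated partially ordered free A-module that is finitely presented (presented by a finite quiver). If the induced order on each cyclic factor of M is the A⁺-divisibility order (non-degeneracy), then (M,≤) is lower finite: the lower hull of every finitely generated A⁺-submodule is finitely generated. Conversely, if (M,≤) is lower finite then it is non-degenerate. -/

import Mathlib

namespace Stmt16Aux

variable {E I A : Type} [CommMonoid A]

/-- `isPath src tgt i l j`: the list of edges `l` forms a path from `i` to `j`. -/
def isPath (src tgt : E → I) : I → List E → I → Prop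
  | i, [], j => i = j
  | i, e :: l, j => src e = i ∧ isPath src tgt (tgt e) l j

/-- Endpoint of a list of edges started at `i`. -/
def endAt (tgt : E → I) : I → List E → I
  | i, [] => i
  | _, e :: l => endAt tgt (tgt e) l

/-- Product of the labels along a list of edges. -/
def pp (lab : E → A) (l : List E) : A := (l.map lab).prod

lemma pp_nil (lab : E → A) : pp lab ([] : List E) = 1 := rfl

lemma pp_cons (lab : E → A) (e : E) (l : List E) :
    pp lab (e :: l) = lab e * pp lab l := by simp [pp]

lemma pp_append (lab : E → A) (l₁ l₂ : List E) :
    pp lab (l₁ ++ l₂) = pp lab l₁ * pp lab l₂ := by simp [pp]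

lemma isPath_append {src tgt : E → I} {i j : I} {l₁ l₂ : List E} :
    isPath src tgt i (l₁ ++ l₂) j ↔
      ∃ m, isPath src tgt i l₁ m ∧ isPath src tgt m l₂ j := by
  induction l₁ generalizing i with
  | nil => simp [isPath]
  | cons e l ih => simp [isPath, ih, and_assoc]

lemma endAt_append (tgt : E → I) (i : I) (l₁ l₂ : List E) :
    endAt tgt i (l₁ ++ l₂) = endAt tgt (endAt tgt i l₁) l₂ := by
  induction l₁ generalizing i with
  | nil => rfl
  | cons e l ih => simp [endAt, ih]

lemma isPath_endAt {src tgt : E → I} {i j : I} {l : List E}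
    (h : isPath src tgt i l j) : endAt tgt i l = j := by
  induction l generalizing i with
  | nil => exact h
  | cons e l ih => exact ih h.2

lemma path_rtg (src tgt : E → I) (lab : E → A) (l : List E) :
    ∀ (y : I × A) (j : I), isPath src tgt y.1 l j →
    Relation.ReflTransGen
      (fun u v : I × A => ∃ e : E, v.1 = src e ∧ u = (tgt e, lab e * v.2))
      (j, pp lab l * y.2) y := by
  induction l with
  | nil =>
    intro y j hp
    obtain rfl : y.1 = j := hp
    rw [pp_nil, one_mul]
  | cons e l ih =>
    intro y j hp
    obtain ⟨hsrc, hp'⟩ := hp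
    have h1 := ih (tgt e, lab e * y.2) j hp'
    have h3 := h1.tail (⟨e, hsrc.symm, rfl⟩ :
      ∃ e' : E, y.1 = src e' ∧
        ((tgt e, lab e * y.2) : I × A) = (tgt e', lab e' * y.2))
    have heq : ((j, pp lab (e :: l) * y.2) : I × A)
        = (j, pp lab l * ((tgt e, lab e * y.2) : I × A).2) := by
      simp [pp_cons, mul_assoc, mul_comm, mul_left_comm]
    rw [heq]
    exact h3

/-- Translation between the reflexive-transitive closure of the quiver step
relation and explicit paths. -/
lemma rtg_iff (src tgt : E → I) (lab : E → A) (y z : I × A) :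
    Relation.ReflTransGen
      (fun u v : I × A => ∃ e : E, v.1 = src e ∧ u = (tgt e, lab e * v.2)) z y ↔
    ∃ l j, isPath src tgt y.1 l j ∧ z = (j, pp lab l * y.2) := by
  constructor
  · intro hz
    induction hz using Relation.ReflTransGen.head_induction_on with
    | refl => exact ⟨[], y.1, rfl, by simp [pp_nil]⟩
    | head hstep hrest ih =>
      obtain ⟨l, j, hp, hc⟩ := ih
      obtain ⟨e, he1, he2⟩ := hstep
      have hsrc : src e = j := by rw [← he1, hc]
      refine ⟨l ++ [e], tgt e, isPath_append.mpr ⟨j, hp, hsrc, rfl⟩, ?_⟩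
      rw [he2, hc]
      simp [pp_append, pp_cons, pp_nil, mul_assoc, mul_comm, mul_left_comm]
  · rintro ⟨l, j, hp, rfl⟩
    exact path_rtg src tgt lab l y j hp

/-- Shortening paths: if every cycle has product in `Ap`, every path can be
replaced by a path of length at most `card I` with the same endpoints whose
product divides the original one (in the `Ap`-sense). -/
lemma shorten [Fintype I] (src tgt : E → I) (lab : E → A) (Ap : Submonoid A)
    (hcyc : ∀ (j : I) (l : List E), isPath src tgt j l j → pp lab l ∈ Ap) :
    ∀ (n : ℕ) (l : List E), l.length ≤ n → ∀ (i j : I), isPath src tgt i l j →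
    ∃ l', l'.length ≤ Fintype.card I ∧ isPath src tgt i l' j ∧
      ∃ h ∈ Ap, pp lab l = h * pp lab l' := by
  intro n
  induction n with
  | zero =>
    intro l hl i j hp
    exact ⟨l, le_trans hl (Nat.zero_le _), hp, 1, Ap.one_mem, (one_mul _).symm⟩
  | succ n ih =>
    intro l hl i j hp
    by_cases hlen : l.length ≤ Fintype.card I
    · exact ⟨l, hlen, hp, 1, Ap.one_mem, (one_mul _).symm⟩
    · push_neg at hlen
      have key : ∀ p q : ℕ, p < q → q ≤ l.length →
          endAt tgt i (l.take p) = endAt tgt i (l.take q) →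
          ∃ l', l'.length ≤ Fintype.card I ∧ isPath src tgt i l' j ∧
            ∃ h ∈ Ap, pp lab l = h * pp lab l' := by
        intro p q hpq hq heq
        obtain ⟨m, h₁, h₂⟩ := isPath_append.mp
          (show isPath src tgt i (l.take p ++ l.drop p) j by
            rw [List.take_append_drop]; exact hp)
        obtain ⟨m₂, hmid, hrest⟩ := isPath_append.mp
          (show isPath src tgt m
              ((l.drop p).take (q - p) ++ (l.drop p).drop (q - p)) j by
            rw [List.take_append_drop]; exact h₂)
        have hm : endAt tgt i (l.take p) = m := isPath_endAt h₁
        have htq : l.take q = l.take p ++ (l.drop p).take (q - p) := by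
          conv_lhs => rw [show q = p + (q - p) by omega]
          exact List.take_add
        have hmm : m₂ = m := by
          have h5 : endAt tgt m ((l.drop p).take (q - p)) = m₂ := isPath_endAt hmid
          rw [← h5, ← hm, ← endAt_append, ← htq, heq]
        rw [hmm] at hmid hrest
        have hc : pp lab ((l.drop p).take (q - p)) ∈ Ap := hcyc m _ hmid
        have hpath' : isPath src tgt i (l.take p ++ (l.drop p).drop (q - p)) j :=
          isPath_append.mpr ⟨m, h₁, hrest⟩
        have hlen' : (l.take p ++ (l.drop p).drop (q - p)).length ≤ n := by
          have e1 : (l.take p).length = min p l.length := List.length_take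
          have e2 : ((l.drop p).drop (q - p)).length
              = (l.drop p).length - (q - p) := List.length_drop
          have e3 : (l.drop p).length = l.length - p := List.length_drop
          rw [List.length_append]
          omega
        obtain ⟨l'', h1'', h2'', h3, hh3, h4⟩ := ih _ hlen' i j hpath'
        refine ⟨l'', h1'', h2'', pp lab ((l.drop p).take (q - p)) * h3,
          Ap.mul_mem hc hh3, ?_⟩
        have e1 : pp lab (l.take p) * (pp lab ((l.drop p).take (q - p)) *
            pp lab ((l.drop p).drop (q - p))) = pp lab l := by
          rw [← pp_append, List.take_append_drop, ← pp_append, List.take_append_drop]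
        calc pp lab l
            = pp lab (l.take p) * (pp lab ((l.drop p).take (q - p)) *
                pp lab ((l.drop p).drop (q - p))) := e1.symm
          _ = pp lab ((l.drop p).take (q - p)) *
                (pp lab (l.take p) * pp lab ((l.drop p).drop (q - p))) := by
              rw [mul_left_comm]
          _ = pp lab ((l.drop p).take (q - p)) *
                pp lab (l.take p ++ (l.drop p).drop (q - p)) := by rw [← pp_append]
          _ = pp lab ((l.drop p).take (q - p)) * (h3 * pp lab l'') := by rw [h4]
          _ = pp lab ((l.drop p).take (q - p)) * h3 * pp lab l'' :=
              (mul_assoc _ _ _).symm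
      have hcard : Fintype.card I < Fintype.card (Fin (l.length + 1)) := by
        simpa using Nat.lt_succ_of_lt hlen
      obtain ⟨a, b, hab, hfab⟩ := Fintype.exists_ne_map_eq_of_card_lt
        (fun k : Fin (l.length + 1) => endAt tgt i (l.take (k : ℕ))) hcard
      rcases hab.lt_or_gt with hlt | hlt
      · exact key a b hlt (Nat.lt_succ_iff.mp b.isLt) hfab
      · exact key b a hlt (Nat.lt_succ_iff.mp a.isLt) hfab.symm

end Stmt16Aux

open Stmt16Aux

theorem stmt16 (A : Type) [CommMonoid A] (Ap : Submonoid A)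
    -- A is cancellative (domain, away from the absent zero)
    (hcancel : ∀ a b c : A, a * b = a * c → b = c)
    -- A is a localisation of A⁺: every element of A is a fraction over A⁺
    (hloc : ∀ a : A, ∃ s ∈ Ap, s * a ∈ Ap)
    -- A⁺ is sharp
    (hsharp : ∀ u ∈ Ap, (∃ v ∈ Ap, u * v = 1) → u = 1)
    -- A⁺ is integrally closed in A
    (hic : ∀ f : A,
      (∃ K : Finset A, ∀ n : ℕ, ∃ k ∈ K, ∃ h ∈ Ap, f ^ n = h * k) → f ∈ Ap)
    (I : Type) (hI : Finite I) (le : I × A → I × A → Prop)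
    (hrefl : ∀ x, le x x)
    (htrans : ∀ x y z, le x y → le y z → le x z)
    (hantisymm : ∀ x y, le x y → le y x → x = y)
    (hdiv : ∀ (x : I × A), ∀ h ∈ Ap, le (x.1, h * x.2) x)
    (hmono : ∀ (a : A) (x y : I × A), le x y → le (x.1, a * x.2) (y.1, a * y.2))
    -- lower saturation
    (hsat : ∀ D : Set (I × A),
      (∀ h ∈ Ap, ∀ x ∈ D, (x.1, h * x.2) ∈ D) →
      (∀ x y : I × A, le x y → y ∈ D → x ∈ D) →
      ∀ f : A, ∀ x y : I × A, le x y →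
        y ∈ (fun z : I × A => (z.1, f * z.2)) '' D →
        x ∈ (fun z : I × A => (z.1, f * z.2)) '' D)
    -- finite presentation: the order is presented by a finite quiver
    (hfp : ∃ (E : Type) (_ : Finite E) (src tgt : E → I) (lab : E → A),
      ∀ x y : I × A, le x y ↔
        ∃ z : I × A,
          Relation.ReflTransGen
            (fun u v : I × A => ∃ e : E, v.1 = src e ∧ u = (tgt e, lab e * v.2)) z y ∧
          ∃ h ∈ Ap, x = (z.1, h * z.2)) :
    -- non-degeneracy ↔ lower finiteness
    ((∀ (i : I) (a b : A), le (i, a) (i, b) ↔ ∃ h ∈ Ap, a = h * b) ↔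
      (∀ F : Finset (I × A), ∃ G : Finset (I × A),
        {x : I × A | ∃ h ∈ Ap, ∃ g ∈ F, le x (g.1, h * g.2)} =
          {x : I × A | ∃ h ∈ Ap, ∃ g ∈ G, x = (g.1, h * g.2)})) := by
  classical
  obtain ⟨E, hE, src, tgt, lab, hfp⟩ := hfp
  haveI := Fintype.ofFinite I
  haveI : Finite E := hE
  constructor
  · -- non-degeneracy → lower finiteness
    intro hnd F
    -- every cycle product lies in Ap
    have hcyc : ∀ (j : I) (l : List E), isPath src tgt j l j → pp lab l ∈ Ap := by
      intro j l hl
      have hle : le (j, pp lab l * 1) (j, 1) := by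
        rw [hfp]
        refine ⟨(j, pp lab l * 1), ?_, 1, Ap.one_mem, by rw [one_mul]⟩
        exact (rtg_iff src tgt lab (j, 1) _).mpr ⟨l, j, hl, rfl⟩
      obtain ⟨h, hh, hhe⟩ := (hnd j _ _).mp hle
      rw [mul_one, mul_one] at hhe
      exact hhe ▸ hh
    have hSfin : Set.Finite {p : (I × A) × List E | p.1 ∈ F ∧
        p.2.length ≤ Fintype.card I ∧
        isPath src tgt p.1.1 p.2 (endAt tgt p.1.1 p.2)} := by
      apply Set.Finite.subset
        (F.finite_toSet.prod (List.finite_length_le E (Fintype.card I)))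
      rintro ⟨g, l⟩ ⟨h1, h2, _⟩
      exact ⟨h1, h2⟩
    have hTfin := hSfin.image
      (fun p : (I × A) × List E => (endAt tgt p.1.1 p.2, pp lab p.2 * p.1.2))
    refine ⟨hTfin.toFinset, ?_⟩
    ext x
    simp only [Set.mem_setOf_eq]
    constructor
    · rintro ⟨h, hh, g, hg, hle⟩
      rw [hfp] at hle
      obtain ⟨z, hz, h', hh', hx⟩ := hle
      obtain ⟨l, j, hpath, hz2⟩ := (rtg_iff src tgt lab _ _).mp hz
      obtain ⟨l'', hlen'', hpath'', h₂, hh₂, hpp⟩ :=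
        shorten src tgt lab Ap hcyc l.length l le_rfl g.1 j hpath
      have hj : endAt tgt g.1 l'' = j := isPath_endAt hpath''
      refine ⟨h' * h₂ * h, Ap.mul_mem (Ap.mul_mem hh' hh₂) hh,
        (endAt tgt g.1 l'', pp lab l'' * g.2), ?_, ?_⟩
      · rw [Set.Finite.mem_toFinset]
        exact ⟨(g, l''), ⟨hg, hlen'', by rw [hj]; exact hpath''⟩, rfl⟩
      · subst hx
        subst hz2
        simp only [Prod.mk.injEq]
        refine ⟨hj.symm, ?_⟩
        rw [hpp]
        simp [mul_assoc, mul_comm, mul_left_comm]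
    · rintro ⟨h, hh, g', hg', hx⟩
      rw [Set.Finite.mem_toFinset] at hg'
      obtain ⟨⟨g, l⟩, ⟨hgF, hlen, hpath⟩, rfl⟩ := hg'
      refine ⟨1, Ap.one_mem, g, hgF, ?_⟩
      rw [hfp]
      refine ⟨(endAt tgt g.1 l, pp lab l * (1 * g.2)), ?_, h, hh, ?_⟩
      · exact (rtg_iff src tgt lab (g.1, 1 * g.2) _).mpr ⟨l, _, hpath, rfl⟩
      · rw [hx]
        simp
  · -- lower finiteness → non-degeneracy
    intro hlf i a b
    constructor
    · intro hle
      rw [hfp] at hle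
      obtain ⟨z, hz, h, hh, hx⟩ := hle
      obtain ⟨l, j, hpath, hz2⟩ := (rtg_iff src tgt lab _ _).mp hz
      subst hz2
      have hij : i = j := by simpa using congrArg Prod.fst hx
      subst hij
      have ha : a = h * (pp lab l * b) := by simpa using congrArg Prod.snd hx
      set p := pp lab l with hpdef
      have hcyc : ∀ c : A, le (i, p * c) (i, c) := by
        intro c
        rw [hfp]
        exact ⟨(i, p * c),
          (rtg_iff src tgt lab (i, c) _).mpr ⟨l, i, hpath, rfl⟩,
          1, Ap.one_mem, by rw [one_mul]⟩
      have hpow : ∀ n : ℕ, le (i, p ^ n) (i, 1) := by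
        intro n
        induction n with
        | zero => simpa [pow_zero] using hrefl (i, (1 : A))
        | succ n ihn =>
          have hps : p ^ (n + 1) = p * p ^ n := by
            rw [pow_succ]; exact mul_comm _ _
          have h1 := hcyc (p ^ n)
          rw [← hps] at h1
          exact htrans _ _ _ h1 ihn
      obtain ⟨G, hG⟩ := hlf {((i : I), (1 : A))}
      have hmem : ∀ n : ℕ, ∃ h' ∈ Ap, ∃ g ∈ G,
          ((i, p ^ n) : I × A) = (g.1, h' * g.2) := by
        intro n
        have hmem' : ((i, p ^ n) : I × A) ∈
            {x : I × A | ∃ h ∈ Ap, ∃ g ∈ ({((i : I), (1 : A))} : Finset (I × A)),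
              le x (g.1, h * g.2)} :=
          ⟨1, Ap.one_mem, (i, 1), Finset.mem_singleton_self _, by simpa using hpow n⟩
        rw [hG] at hmem'
        exact hmem'
      have hpAp : p ∈ Ap := by
        apply hic
        refine ⟨G.image Prod.snd, fun n => ?_⟩
        obtain ⟨h', hh', g, hgG, hgx⟩ := hmem n
        have : p ^ n = h' * g.2 := by simpa using congrArg Prod.snd hgx
        exact ⟨g.2, Finset.mem_image_of_mem _ hgG, h', hh', this⟩
      exact ⟨h * p, Ap.mul_mem hh hpAp, by rw [ha, ← mul_assoc]⟩
    · rintro ⟨h, hh, rfl⟩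
      exact hdiv (i, b) h hh
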